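/- The full subcategory T of objects X in a triangulated category (or, in Lean, an additive category with a compatible shift/exact structure) on which the unit of an exact adjunction L ⊣ R is an isomorphism is a thick subcategory: it is closed under isomorphisms, shifts, extensions (cones), and direct summands. -/

import Mathlib

open CategoryTheory Limits Pretriangulated

namespace Stmt4Aux

variable {C D : Type*} [Category C] [Category D]

/-- The unit of an adjunction is an isomorphism at `Y` iff `L` induces a bijection
on `Hom(Z, Y)` for every `Z`. -/
lemma unit_isIso_iff_bijective {L : C ⥤ D} {R : D ⥤ C} (adj : L ⊣ R) (Y : C) :
    IsIso (adj.unit.app Y) ↔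
      ∀ Z : C, Function.Bijective (fun f : Z ⟶ Y => L.map f) := by
  have key : ∀ (Z : C) (f : Z ⟶ Y),
      (adj.homEquiv Z (L.obj Y)) (L.map f) = f ≫ adj.unit.app Y := by
    intro Z f
    rw [Adjunction.homEquiv_unit]
    exact (adj.unit.naturality f).symm
  constructor
  · intro h Z
    have eq : (fun f : Z ⟶ Y => L.map f) =
        (adj.homEquiv Z (L.obj Y)).symm ∘ (fun f : Z ⟶ Y => f ≫ adj.unit.app Y) := by
      funext f
      rw [Function.comp_apply, ← key, Equiv.symm_apply_apply]
    rw [eq]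
    exact (adj.homEquiv Z (L.obj Y)).symm.bijective.comp
      ((isIso_iff_yoneda_map_bijective (adj.unit.app Y)).1 h Z)
  · intro h
    refine isIso_of_yoneda_map_bijective _ (fun Z => ?_)
    show Function.Bijective (fun f : Z ⟶ Y => f ≫ adj.unit.app Y)
    have eq : (fun f : Z ⟶ Y => f ≫ adj.unit.app Y) =
        (adj.homEquiv Z (L.obj Y)) ∘ (fun f : Z ⟶ Y => L.map f) := by
      funext f
      rw [Function.comp_apply, key]
    rw [eq]
    exact (adj.homEquiv Z (L.obj Y)).bijective.comp (h Z)

/-- Transport of the bijectivity property along an isomorphism in the source. -/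
lemma bijective_of_iso (L : C ⥤ D) {Y Z Z' : C} (i : Z' ≅ Z)
    (h : Function.Bijective (fun f : Z' ⟶ Y => L.map f)) :
    Function.Bijective (fun f : Z ⟶ Y => L.map f) := by
  constructor
  · intro f g hfg
    replace hfg : L.map f = L.map g := hfg
    have h₁ : L.map (i.hom ≫ f) = L.map (i.hom ≫ g) := by
      rw [L.map_comp, L.map_comp, hfg]
    have h₂ : i.hom ≫ f = i.hom ≫ g := h.1 h₁
    exact (Iso.cancel_iso_hom_left i f g).1 h₂
  · intro s
    obtain ⟨f', hf'⟩ := h.2 (L.map i.hom ≫ s)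
    replace hf' : L.map f' = L.map i.hom ≫ s := hf'
    refine ⟨i.inv ≫ f', ?_⟩
    show L.map (i.inv ≫ f') = s
    rw [L.map_comp, hf', ← Category.assoc, ← L.map_comp, Iso.inv_hom_id,
      L.map_id, Category.id_comp]

variable [HasShift C ℤ] [HasShift D ℤ]

/-- The bijectivity property is stable under shifts, using the `CommShift` structure on `L`. -/
lemma bijective_shift (L : C ⥤ D) [L.CommShift ℤ] (X : C) (n : ℤ)
    (hX : ∀ Z : C, Function.Bijective (fun f : Z ⟶ X => L.map f)) :
    ∀ Z : C, Function.Bijective (fun f : Z ⟶ X⟦n⟧ => L.map f) := by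
  -- first prove it for objects of the form `W⟦n⟧`
  have natur : ∀ (W : C) (g : W ⟶ X), L.map (g⟦n⟧') =
      (L.commShiftIso n).hom.app W ≫ (L.map g)⟦n⟧' ≫ (L.commShiftIso n).inv.app X := by
    intro W g
    have h := (L.commShiftIso n).hom.naturality g
    dsimp at h
    rw [← cancel_mono ((L.commShiftIso n).hom.app X), h]
    simp
  have main : ∀ W : C, Function.Bijective (fun f : W⟦n⟧ ⟶ X⟦n⟧ => L.map f) := by
    intro W
    constructor
    · intro f₁ f₂ hf
      obtain ⟨g₁, rfl⟩ := (shiftFunctor C n).map_surjective f₁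
      obtain ⟨g₂, rfl⟩ := (shiftFunctor C n).map_surjective f₂
      replace hf : L.map ((shiftFunctor C n).map g₁) =
        L.map ((shiftFunctor C n).map g₂) := hf
      rw [natur W g₁, natur W g₂] at hf
      have h₁ : (L.map g₁)⟦n⟧' = (L.map g₂)⟦n⟧' := by
        rw [← cancel_epi ((L.commShiftIso n).hom.app W),
          ← cancel_mono ((L.commShiftIso n).inv.app X)]
        simpa using hf
      have h₂ : L.map g₁ = L.map g₂ := (shiftFunctor D n).map_injective h₁
      exact congrArg (fun g => (shiftFunctor C n).map g) ((hX W).1 h₂)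
    · intro s
      obtain ⟨t, ht⟩ := (shiftFunctor D n).map_surjective
        ((L.commShiftIso n).inv.app W ≫ s ≫ (L.commShiftIso n).hom.app X)
      obtain ⟨g, hg⟩ := (hX W).2 t
      replace hg : L.map g = t := hg
      refine ⟨g⟦n⟧', ?_⟩
      show L.map (g⟦n⟧') = s
      rw [natur W g, hg, ht]
      simp
  intro Z
  exact bijective_of_iso L
    (show ((Z⟦(-n : ℤ)⟧)⟦n⟧ ≅ Z) from (shiftEquiv C n).counitIso.app Z) (main _)

variable [HasZeroObject C] [HasZeroObject D] [Preadditive C] [Preadditive D]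
  [∀ n : ℤ, (shiftFunctor C n).Additive] [∀ n : ℤ, (shiftFunctor D n).Additive]
  [Pretriangulated C] [Pretriangulated D]

/-- The bijectivity property is stable under extensions. -/
lemma bijective_ext (L : C ⥤ D) [L.CommShift ℤ] [L.IsTriangulated]
    (T : Triangle C) (hT : T ∈ distTriang C)
    (h1 : ∀ Z : C, Function.Bijective (fun f : Z ⟶ T.obj₁ => L.map f))
    (h3 : ∀ Z : C, Function.Bijective (fun f : Z ⟶ T.obj₃ => L.map f)) :
    ∀ Z : C, Function.Bijective (fun f : Z ⟶ T.obj₂ => L.map f) := by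
  have hLT : L.mapTriangle.obj T ∈ distTriang D := L.map_distinguished T hT
  have hT' : T.invRotate ∈ distTriang C := inv_rot_of_distTriang T hT
  have hLT' : L.mapTriangle.obj T.invRotate ∈ distTriang D :=
    L.map_distinguished _ hT'
  intro Z
  constructor
  · -- injectivity
    intro u u' huu
    replace huu : L.map u = L.map u' := huu
    suffices h : ∀ v : Z ⟶ T.obj₂, L.map v = 0 → v = 0 by
      have h0 : L.map (u - u') = 0 := by rw [L.map_sub, huu, sub_self]
      have := h _ h0
      rwa [sub_eq_zero] at this
    intro u hu
    have h2 : u ≫ T.mor₂ = 0 := by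
      apply (h3 Z).1
      show L.map (u ≫ T.mor₂) = L.map 0
      rw [L.map_zero, L.map_comp, hu, zero_comp]
    obtain ⟨v, rfl⟩ := Triangle.coyoneda_exact₂ T hT u h2
    have h4 : L.map v ≫ (L.mapTriangle.obj T.invRotate).mor₂ = 0 := by
      have e : (L.mapTriangle.obj T.invRotate).mor₂ = L.map T.mor₁ := rfl
      exact (by rw [← L.map_comp, hu] : L.map v ≫ L.map T.mor₁ = 0)
    obtain ⟨w, hw⟩ := Triangle.coyoneda_exact₂ _ hLT' (L.map v) h4
    obtain ⟨t, ht⟩ := (bijective_shift L T.obj₃ (-1) h3 Z).2 w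
    replace ht : L.map t = w := ht
    have h5 : v = t ≫ T.invRotate.mor₁ := by
      apply (h1 Z).1
      show L.map v = L.map (t ≫ T.invRotate.mor₁)
      subst ht
      exact hw.trans (L.map_comp t T.invRotate.mor₁).symm
    rw [h5]
    have h6 : T.invRotate.mor₁ ≫ T.mor₁ = 0 := comp_distTriang_mor_zero₁₂ _ hT'
    exact (Category.assoc t _ _).trans ((congrArg (fun g => t ≫ g) h6).trans comp_zero)
  · -- surjectivity
    intro s
    obtain ⟨t, ht⟩ := (h3 Z).2 (s ≫ L.map T.mor₂)
    replace ht : L.map t = s ≫ L.map T.mor₂ := ht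
    have h2 : t ≫ T.mor₃ = 0 := by
      apply (bijective_shift L T.obj₁ 1 h1 Z).1
      show L.map (t ≫ T.mor₃) = L.map 0
      rw [L.map_zero, L.map_comp, ht, Category.assoc, ← L.map_comp,
        comp_distTriang_mor_zero₂₃ T hT, L.map_zero, comp_zero]
    obtain ⟨u, hu⟩ := Triangle.coyoneda_exact₃ T hT t h2
    have h4 : (s - L.map u) ≫ (L.mapTriangle.obj T).mor₂ = 0 := by
      have e : (L.mapTriangle.obj T).mor₂ = L.map T.mor₂ := rfl
      exact (Preadditive.sub_comp _ _ _).trans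
        (sub_eq_zero.2 (ht.symm.trans ((congrArg L.map hu).trans (L.map_comp u T.mor₂))))
    obtain ⟨r, hr⟩ := Triangle.coyoneda_exact₂ _ hLT (s - L.map u) h4
    obtain ⟨q, hq⟩ := (h1 Z).2 r
    replace hq : L.map q = r := hq
    refine ⟨q ≫ T.mor₁ + u, ?_⟩
    show L.map (q ≫ T.mor₁ + u) = s
    have e : (L.mapTriangle.obj T).mor₁ = L.map T.mor₁ := rfl
    rw [L.map_add, L.map_comp, hq]
    exact (congrArg (· + L.map u) hr.symm).trans (sub_add_cancel s (L.map u))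

end Stmt4Aux

open Stmt4Aux

/-- For an adjunction `L ⊣ R` of exact (triangulated) functors between (pre)triangulated
categories, the full subcategory `T = {X | η_X : X → R(L X) is an isomorphism}` is a thick
subcategory: it is closed under isomorphisms, shifts, extensions (cones in distinguished
triangles) and direct summands. -/
theorem stmt4 {C D : Type*} [Category C] [Category D]
    [HasZeroObject C] [HasZeroObject D] [Preadditive C] [Preadditive D]
    [HasShift C ℤ] [HasShift D ℤ]
    [∀ n : ℤ, (shiftFunctor C n).Additive] [∀ n : ℤ, (shiftFunctor D n).Additive]
    [Pretriangulated C] [Pretriangulated D] [HasBinaryBiproducts C]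
    (L : C ⥤ D) (R : D ⥤ C) [L.CommShift ℤ] [R.CommShift ℤ]
    [L.IsTriangulated] [R.IsTriangulated]
    (adj : L ⊣ R) :
    (∀ X Y : C, (X ≅ Y) → IsIso (adj.unit.app X) → IsIso (adj.unit.app Y)) ∧
    (∀ (X : C) (n : ℤ), IsIso (adj.unit.app X) → IsIso (adj.unit.app (X⟦n⟧))) ∧
    (∀ T : Triangle C, T ∈ (distTriang C) → IsIso (adj.unit.app T.obj₁) →
      IsIso (adj.unit.app T.obj₃) → IsIso (adj.unit.app T.obj₂)) ∧
    (∀ X Y : C, IsIso (adj.unit.app (X ⊞ Y)) → IsIso (adj.unit.app X)) := by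
  refine ⟨?_, ?_, ?_, ?_⟩
  · -- closed under isomorphisms
    intro X Y e h
    have : adj.unit.app Y = e.inv ≫ adj.unit.app X ≫ (L ⋙ R).map e.hom := by
      rw [← adj.unit.naturality e.hom, ← Category.assoc]
      simp
    rw [this]
    infer_instance
  · -- closed under shifts
    intro X n h
    rw [unit_isIso_iff_bijective] at h ⊢
    exact bijective_shift L X n h
  · -- closed under extensions
    intro T hT h1 h3
    rw [unit_isIso_iff_bijective] at h1 h3 ⊢
    exact bijective_ext L T hT h1 h3
  · -- closed under direct summands
    intro X Y h
    have hnat₁ := adj.unit.naturality (biprod.inl : X ⟶ X ⊞ Y)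
    have hnat₂ := adj.unit.naturality (biprod.fst : X ⊞ Y ⟶ X)
    simp only [Functor.id_map] at hnat₁ hnat₂
    refine ⟨(L ⋙ R).map biprod.inl ≫ inv (adj.unit.app (X ⊞ Y)) ≫ biprod.fst, ?_, ?_⟩
    · rw [← Category.assoc, ← hnat₁, Category.assoc, IsIso.hom_inv_id_assoc]
      simp
    · simp only [Category.assoc]
      rw [hnat₂, IsIso.inv_hom_id_assoc, ← Functor.map_comp]
      simp
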